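/- Let S be a finite nonempty set and, for each s ∈ S, let T(s) ⊆ S be a subset. In the polynomial ring ℂ[X_s : s ∈ S], the ideal generated by the polynomials P_s := ∏_{t ∈ T(s)} (X_s − X_t + 1/2), for s ranging over S (with the empty product equal to 1), is the unit ideal. -/

import Mathlib

open MvPolynomial

/-- For a finite nonempty set `S` and subsets `T s ⊆ S`, the ideal of `ℂ[X_s : s ∈ S]`
generated by the polynomials `P_s = ∏_{t ∈ T s} (X_s - X t + 1/2)` is the unit ideal. -/
theorem unit_ideal_of_shift_products (S : Type*) [Fintype S] [Nonempty S] [DecidableEq S]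
    (T : S → Finset S) :
    Ideal.span
      {p : MvPolynomial S ℂ | ∃ s : S, p = ∏ t ∈ T s, (X s - X t + C (1 / 2 : ℂ))} = ⊤ := by
  set I := Ideal.span
      {p : MvPolynomial S ℂ | ∃ s : S, p = ∏ t ∈ T s, (X s - X t + C (1 / 2 : ℂ))} with hI
  rw [← Ideal.radical_eq_top, ← MvPolynomial.vanishingIdeal_zeroLocus_eq_radical (K := ℂ)]
  have hempty : MvPolynomial.zeroLocus ℂ I = ∅ := by
    rw [Set.eq_empty_iff_forall_notMem]
    intro x hx
    -- pick s maximizing re (x s)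
    obtain ⟨s, -, hs⟩ := Finset.exists_max_image (Finset.univ : Finset S)
      (fun s => (x s).re) ⟨Classical.arbitrary S, Finset.mem_univ _⟩
    have hmem : (∏ t ∈ T s, (X s - X t + C (1 / 2 : ℂ))) ∈ I :=
      Ideal.subset_span ⟨s, rfl⟩
    have h0 := (MvPolynomial.mem_zeroLocus_iff.mp hx) _ hmem
    rw [map_prod] at h0
    obtain ⟨t, -, ht⟩ := Finset.prod_eq_zero_iff.mp h0
    simp only [map_add, map_sub, eval_X, eval_C, aeval_X, aeval_C, Algebra.algebraMap_self, RingHom.id_apply] at ht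
    have hxt : x t = x s + 1 / 2 := by linear_combination -ht
    have hle := hs t (Finset.mem_univ t)
    have hre := congrArg Complex.re hxt
    simp [Complex.add_re] at hre
    norm_num at hre
    linarith
  rw [hempty]
  rw [eq_top_iff]
  intro p _
  exact fun x hx => absurd hx (Set.notMem_empty x)
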